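/- Let d ≥ 1 and let n ∈ (0, 1), ρ^{sR} > 0, ρ^{wR} > 0, g > 0, k > 0, Δt > 0 be constants. Set ρ^w := n ρ^{wR}, ρ^s := (1 − n) ρ^{sR}, and ρ := ρ^s + ρ^w. Let v^*_s, v^*_{wR}, v^{t+1}_s, v^{t+1}_{wR} : ℝ^d → ℝ^d be differentiable vector fields and let Δp : ℝ^d → ℝ be twice continuously differentiable. Assume that at every point: (i) the mixture pressure-correction equation ρ (v^{t+1}_s − v^*_s)/Δt = −∇Δp holds; (ii) the water pressure-correction equation ρ^w (v^{t+1}_s − v^*_s)/Δt + (n² ρ^{wR} g / k) (v^{t+1}_{wR} − v^*_{wR}) = −n ∇Δp holds; (iii) the incompressibility condition div v^{t+1}_s + n · div v^{t+1}_{wR} = 0 holds. Then at every point, ( (k / (ρ^w g)) (ρ^w/ρ − n) − Δt/ρ ) · ∇²Δp = −div v^*_s − n · div v^*_{wR}, where ∇²Δp denotes the Laplacian of Δp (the divergence of its gradient). -/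

import Mathlib

/-- The divergence of a vector field `v : ℝ^d → ℝ^d` at `x`:
the trace of the Fréchet derivative of `v` at `x`. -/
noncomputable def vdiv {d : ℕ} (v : EuclideanSpace ℝ (Fin d) → EuclideanSpace ℝ (Fin d))
    (x : EuclideanSpace ℝ (Fin d)) : ℝ :=
  LinearMap.trace ℝ (EuclideanSpace ℝ (Fin d)) (fderiv ℝ v x).toLinearMap

private lemma vdiv_add_smul {d : ℕ}
    {f g : EuclideanSpace ℝ (Fin d) → EuclideanSpace ℝ (Fin d)}
    (hf : Differentiable ℝ f) (hg : Differentiable ℝ g) (c : ℝ)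
    (x : EuclideanSpace ℝ (Fin d)) :
    vdiv (fun y => f y + c • g y) x = vdiv f x + c * vdiv g x := by
  unfold vdiv
  have h : fderiv ℝ (fun y => f y + c • g y) x
      = fderiv ℝ f x + c • fderiv ℝ g x := by
    rw [fderiv_fun_add (hf x) (show DifferentiableAt ℝ (fun y => c • g y) x from (hg x).const_smul c), fderiv_fun_const_smul (hg x)]
  rw [h]
  simp [LinearMap.trace]

/-- The pressure Poisson equation of the semi-implicit two-phase MPM:
from the mixture pressure-correction equation, the water pressure-correction
equation, and incompressibility of the final velocities, it follows that
`( (k/(ρ^w g))(ρ^w/ρ − n) − Δt/ρ ) ∇²Δp = −∇·v*_s − n ∇·v*_{wR}` everywhere,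
where `∇²Δp = ∇·(∇Δp)` is the Laplacian of the pressure increment. -/
theorem pressure_poisson_equation {d : ℕ} (hd : 1 ≤ d)
    (n ρsR ρwR g k Δt : ℝ)
    (hn : n ∈ Set.Ioo (0 : ℝ) 1) (hρsR : 0 < ρsR) (hρwR : 0 < ρwR)
    (hg : 0 < g) (hk : 0 < k) (hΔt : 0 < Δt)
    (ρw ρs ρ : ℝ) (hρw : ρw = n * ρwR) (hρs : ρs = (1 - n) * ρsR)
    (hρ : ρ = ρs + ρw)
    (vss vswR vt1s vt1wR : EuclideanSpace ℝ (Fin d) → EuclideanSpace ℝ (Fin d))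
    (hvss : Differentiable ℝ vss) (hvswR : Differentiable ℝ vswR)
    (hvt1s : Differentiable ℝ vt1s) (hvt1wR : Differentiable ℝ vt1wR)
    (Δp : EuclideanSpace ℝ (Fin d) → ℝ) (hΔp : ContDiff ℝ 2 Δp)
    (hmix : ∀ x, (ρ / Δt) • (vt1s x - vss x) = -gradient Δp x)
    (hwater : ∀ x, (ρw / Δt) • (vt1s x - vss x)
        + (n ^ 2 * ρwR * g / k) • (vt1wR x - vswR x) = -(n • gradient Δp x))
    (hincomp : ∀ x, vdiv vt1s x + n * vdiv vt1wR x = 0) :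
    ∀ x, (k / (ρw * g) * (ρw / ρ - n) - Δt / ρ) * vdiv (fun y => gradient Δp y) x
      = -vdiv vss x - n * vdiv vswR x := by
  obtain ⟨hn0, hn1⟩ := hn
  have hρpos : 0 < ρ := by
    have h1 : 0 < (1 - n) * ρsR := mul_pos (by linarith) hρsR
    have h2 : 0 < n * ρwR := mul_pos (by linarith) hρwR
    rw [hρ, hρs, hρw]; linarith
  have hρwpos : 0 < ρw := by rw [hρw]; positivity
  have hG : Differentiable ℝ (fun x => gradient Δp x) := by
    have h1 : ContDiff ℝ 1 (fderiv ℝ Δp) := hΔp.fderiv_right (by norm_num)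
    exact ((InnerProductSpace.toDual ℝ (EuclideanSpace ℝ (Fin d))).symm.toContinuousLinearEquiv.differentiable).comp
      (h1.differentiable one_ne_zero)
  intro x
  -- express vt1s in terms of vss and the gradient
  have h1 : ∀ y, vt1s y = vss y + (-(Δt / ρ)) • gradient Δp y := by
    intro y
    have := hmix y
    have h2 : vt1s y - vss y = -((Δt / ρ) • gradient Δp y) := by
      have h3 : (Δt / ρ) • ((ρ / Δt) • (vt1s y - vss y)) = (Δt / ρ) • (-gradient Δp y) := by
        rw [this]
      rwa [smul_smul, div_mul_div_comm, mul_comm Δt ρ,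
        div_self (by positivity), one_smul, smul_neg] at h3
    rw [neg_smul]; rw [← h2]; abel
  -- express vt1wR in terms of vswR and the gradient
  set c : ℝ := (k / (n ^ 2 * ρwR * g)) * (ρw / ρ - n) with hc
  have h2 : ∀ y, vt1wR y = vswR y + c • gradient Δp y := by
    intro y
    have hw := hwater y
    have hdiff : vt1s y - vss y = (-(Δt / ρ)) • gradient Δp y := by
      rw [h1 y]; abel
    rw [hdiff, smul_smul] at hw
    have hcoef : (n ^ 2 * ρwR * g / k) • (vt1wR y - vswR y)
        = (ρw * (Δt / ρ) / Δt - n) • gradient Δp y := by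
      have : (n ^ 2 * ρwR * g / k) • (vt1wR y - vswR y)
          = -(n • gradient Δp y) - (ρw / Δt * -(Δt / ρ)) • gradient Δp y := by
        rw [← hw]; abel
      rw [this, ← neg_smul, ← sub_smul]
      congr 1
      field_simp
      ring
    have hpos : (0:ℝ) < n ^ 2 * ρwR * g / k := by positivity
    have h4 : vt1wR y - vswR y = c • gradient Δp y := by
      have h5 : (k / (n ^ 2 * ρwR * g)) • ((n ^ 2 * ρwR * g / k) • (vt1wR y - vswR y))
          = (k / (n ^ 2 * ρwR * g)) • ((ρw * (Δt / ρ) / Δt - n) • gradient Δp y) := by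
        rw [hcoef]
      rw [smul_smul, smul_smul] at h5
      have he : k / (n ^ 2 * ρwR * g) * (n ^ 2 * ρwR * g / k) = 1 := by
        field_simp
      rw [he, one_smul] at h5
      rw [h5, hc]
      congr 1
      field_simp
    rw [← h4]; abel
  -- divergence identities
  have hd1 : vdiv vt1s x = vdiv vss x + (-(Δt / ρ)) * vdiv (fun y => gradient Δp y) x := by
    rw [show vt1s = fun y => vss y + (-(Δt / ρ)) • gradient Δp y from funext h1]
    exact vdiv_add_smul hvss hG _ x
  have hd2 : vdiv vt1wR x = vdiv vswR x + c * vdiv (fun y => gradient Δp y) x := by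
    rw [show vt1wR = fun y => vswR y + c • gradient Δp y from funext h2]
    exact vdiv_add_smul hvswR hG _ x
  have hinc := hincomp x
  rw [hd1, hd2] at hinc
  have hcoef2 : k / (ρw * g) * (ρw / ρ - n) - Δt / ρ = n * c - Δt / ρ := by
    rw [hc, hρw]
    field_simp
  rw [hcoef2]
  linarith [hinc]
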